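/- arXiv:2102.02494 — 2 statements merged into one kernel-verified Lean document; each statement's English description precedes it below -/
import Mathlib

section
/- For an unnormalized Dicke state |H^N_w⟩ (the sum over all weight-w bit strings of length N of the corresponding basis vectors), and any nonnegative integer t with t ≤ w ≤ N − t, one has the decomposition |H^N_w⟩ = Σ_{s=0}^{t} |H^t_s⟩ ⊗ |H^{N−t}_{w−s}⟩ under the identification (ℂ²)^{⊗N} ≅ (ℂ²)^{⊗t} ⊗ (ℂ²)^{⊗(N−t)}. -/
/-- Hamming weight of a bit string of length `N`. -/
def hamWeight {N : ℕ} (x : Fin N → Bool) : ℕ :=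
  (Finset.univ.filter (fun i => x i = true)).card

/-- Unnormalized Dicke state `|H^N_w⟩`. -/
noncomputable def dickeH (N w : ℕ) : (Fin N → Bool) → ℂ :=
  fun x => if hamWeight x = w then 1 else 0

lemma hamWeight_le {N : ℕ} (x : Fin N → Bool) : hamWeight x ≤ N := by
  simpa [hamWeight] using (Finset.card_filter_le Finset.univ (fun i => x i = true)).trans
    (le_of_eq (Finset.card_univ.trans (Fintype.card_fin N)))

lemma hamWeight_append {t n : ℕ} (a : Fin t → Bool) (b : Fin n → Bool) :
    hamWeight (Fin.append a b) = hamWeight a + hamWeight b := by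
  simp only [hamWeight, Finset.card_filter]
  rw [Fin.sum_univ_add]
  simp [Fin.append_left, Fin.append_right]

/-- `|H^{t+n}_w⟩ = Σ_{s=0}^{t} |H^t_s⟩ ⊗ |H^{n}_{w−s}⟩`, stated
componentwise under the identification of a length-`t+n` bit string with the
pair of its first `t` bits and last `n` bits (`n = N − t`). -/
theorem dickeH_tensor_decomposition (t n w : ℕ) (htw : t ≤ w) (hwn : w ≤ n)
    (a : Fin t → Bool) (b : Fin n → Bool) :
    dickeH (t + n) w (Fin.append a b) =
      ∑ s ∈ Finset.range (t + 1), dickeH t s a * dickeH n (w - s) b := by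
  have ha : hamWeight a ≤ t := hamWeight_le a
  rw [Finset.sum_eq_single (hamWeight a)]
  · simp only [dickeH, hamWeight_append, if_pos rfl, one_mul]
    have haw : hamWeight a ≤ w := ha.trans htw
    rw [if_pos trivial, one_mul]
    have : (hamWeight a + hamWeight b = w) ↔ (hamWeight b = w - hamWeight a) := by omega
    simp [this]
  · intro s _ hs
    simp [dickeH, Ne.symm hs]
  · intro h
    exact absurd (Finset.mem_range.mpr (Nat.lt_succ_of_le ha)) h
end

section
/- For the shifted gnu code with N = gn + 2g, shift Δ = g, and n odd, the operator X^{⊗N} acts as a logical bit-flip: X^{⊗N}|0_L⟩ = |1_L⟩ and X^{⊗N}|1_L⟩ = |0_L⟩. -/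
/-- Normalized Dicke state `|D^N_w⟩`. -/
noncomputable def dickeD (N w : ℕ) : (Fin N → Bool) → ℂ :=
  fun x => ((Real.sqrt (N.choose w) : ℂ))⁻¹ * dickeH N w x

/-- The transversal bit-flip `X^{⊗N}` (basis permutation by bitwise complement). -/
def transversalX {N : ℕ} (ψ : (Fin N → Bool) → ℂ) : (Fin N → Bool) → ℂ :=
  fun x => ψ (fun i => !x i)

/-- Shifted gnu logical codeword `|0_L⟩` on `N = gn + 2g` qubits (shift `Δ = g`). -/
noncomputable def sgnuZero (g n : ℕ) : (Fin (g * n + 2 * g) → Bool) → ℂ :=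
  ∑ j ∈ (Finset.range (n + 1)).filter (fun j => Even j),
    ((Real.sqrt (2 ^ (n - 1 : ℤ) : ℝ)⁻¹ * Real.sqrt (n.choose j) : ℝ) : ℂ) •
      dickeD (g * n + 2 * g) (g * j + g)

/-- Shifted gnu logical codeword `|1_L⟩` on `N = gn + 2g` qubits (shift `Δ = g`). -/
noncomputable def sgnuOne (g n : ℕ) : (Fin (g * n + 2 * g) → Bool) → ℂ :=
  ∑ j ∈ (Finset.range (n + 1)).filter (fun j => Odd j),
    ((Real.sqrt (2 ^ (n - 1 : ℤ) : ℝ)⁻¹ * Real.sqrt (n.choose j) : ℝ) : ℂ) •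
      dickeD (g * n + 2 * g) (g * j + g)

lemma hamWeight_not {N : ℕ} (x : Fin N → Bool) :
    hamWeight (fun i => !x i) = N - hamWeight x := by
  classical
  unfold hamWeight
  have h : (Finset.univ.filter (fun i => (!x i) = true))
      = (Finset.univ.filter (fun i => x i = true))ᶜ := by
    ext i; simp
  rw [h, Finset.card_compl]
  simp

lemma transversalX_dickeD {N w : ℕ} (hw : w ≤ N) :
    transversalX (dickeD N w) = dickeD N (N - w) := by
  funext x
  have hle := hamWeight_le x
  simp only [transversalX, dickeD, dickeH, hamWeight_not]
  rw [Nat.choose_symm hw]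
  congr 1
  exact if_congr (by omega) rfl rfl

lemma flip_sum (g n : ℕ) (p q : ℕ → Prop) [DecidablePred p] [DecidablePred q]
    (hpq : ∀ j, j ≤ n → (p j ↔ q (n - j))) :
    transversalX (∑ j ∈ (Finset.range (n + 1)).filter p,
      ((Real.sqrt (2 ^ (n - 1 : ℤ) : ℝ)⁻¹ * Real.sqrt (n.choose j) : ℝ) : ℂ) •
        dickeD (g * n + 2 * g) (g * j + g))
    = ∑ j ∈ (Finset.range (n + 1)).filter q,
      ((Real.sqrt (2 ^ (n - 1 : ℤ) : ℝ)⁻¹ * Real.sqrt (n.choose j) : ℝ) : ℂ) •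
        dickeD (g * n + 2 * g) (g * j + g) := by
  funext x
  simp only [transversalX, Finset.sum_apply, Pi.smul_apply]
  refine Finset.sum_nbij' (i := fun j => n - j) (j := fun j => n - j) ?_ ?_ ?_ ?_ ?_
  · intro a ha
    simp only [Finset.mem_filter, Finset.mem_range] at ha ⊢
    exact ⟨by omega, (hpq a (by omega)).mp ha.2⟩
  · intro a ha
    simp only [Finset.mem_filter, Finset.mem_range] at ha ⊢
    refine ⟨by omega, ?_⟩
    have := (hpq (n - a) (by omega)).mpr
    rw [show n - (n - a) = a by omega] at this
    exact this ha.2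
  · intro a ha
    simp only [Finset.mem_filter, Finset.mem_range] at ha
    omega
  · intro a ha
    simp only [Finset.mem_filter, Finset.mem_range] at ha
    omega
  · intro a ha
    simp only [Finset.mem_filter, Finset.mem_range] at ha
    have haln : a ≤ n := by omega
    have harith : g * (n - a) + g * a = g * n := by
      rw [← Nat.mul_add, Nat.sub_add_cancel haln]
    have hle : g * a + g ≤ g * n + 2 * g := by omega
    have hsub : g * n + 2 * g - (g * a + g) = g * (n - a) + g := by omega
    have hD : dickeD (g * n + 2 * g) (g * a + g) (fun i => !x i)
        = dickeD (g * n + 2 * g) (g * (n - a) + g) x := by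
      have := congrFun (transversalX_dickeD hle) x
      rw [hsub] at this
      exact this
    rw [hD, Nat.choose_symm haln]

/-- for the shifted gnu code with `N = gn + 2g`, `Δ = g`, `n` odd,
`X^{⊗N}` acts as a logical bit-flip. -/
theorem transversalX_logical_bitflip (g n : ℕ) (hg : 0 < g) (hn : Odd n) :
    transversalX (sgnuZero g n) = sgnuOne g n ∧
    transversalX (sgnuOne g n) = sgnuZero g n := by
  have hn2 := Nat.odd_iff.mp hn
  constructor
  · exact flip_sum g n (fun j => Even j) (fun j => Odd j)
      (fun j hj => by simp only [Nat.even_iff, Nat.odd_iff]; omega)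
  · exact flip_sum g n (fun j => Odd j) (fun j => Even j)
      (fun j hj => by simp only [Nat.even_iff, Nat.odd_iff]; omega)
end
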